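/- Failure of exact empirical optimization under fixed censoring: let (Y_i^L, Y_i^U), i = 1,…,n, be i.i.d. with P((Y^L, Y^U) = (0,1)) = P((Y^L, Y^U) = (0,2)) = 1/2. Define P_n(a,b) = n^{-1} Σ_i 1{a ≤ Y_i^L ∧ Y_i^U ≤ b} and let Č = [0, 1 + 1{P_n(0,1) < 1/2}] be the shortest interval [0, b] with P_n(0,b) ≥ 1/2. Then P(Č = [0,2]) = P(#{i : Y_i^U = 2} > n/2) → 1/2 as n → ∞; in particular Č is not a consistent estimator of the oracle interval C* = [0,1]. -/

import Mathlib

open MeasureTheory ProbabilityTheory Finset Filter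
open scoped ENNReal

/-! ### Auxiliary lemmas -/

/-- Central binomial bound: `(centralBinom m / 4^m)^2 * (2m+1) ≤ 1`. -/
lemma aux_centralBinom_sq_bound (m : ℕ) :
    ((Nat.centralBinom m : ℝ) / 4 ^ m) ^ 2 * (2 * m + 1) ≤ 1 := by
  induction m with
  | zero => simp [Nat.centralBinom]
  | succ m ih =>
    have key : ((m : ℝ) + 1) * (Nat.centralBinom (m + 1) : ℝ)
        = 2 * (2 * m + 1) * (Nat.centralBinom m : ℝ) := by
      exact_mod_cast congrArg (Nat.cast : ℕ → ℝ) (Nat.succ_mul_centralBinom_succ m)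
    have h4 : (0 : ℝ) < 4 ^ m := by positivity
    have hm : (0 : ℝ) < (m : ℝ) + 1 := by positivity
    have hq : (Nat.centralBinom (m + 1) : ℝ) / 4 ^ (m + 1)
        = ((Nat.centralBinom m : ℝ) / 4 ^ m) * ((2 * m + 1) / (2 * m + 2)) := by
      have h2 : (Nat.centralBinom (m + 1) : ℝ)
          = 2 * (2 * m + 1) * (Nat.centralBinom m : ℝ) / ((m : ℝ) + 1) := by
        field_simp at key ⊢; linarith
      rw [h2, pow_succ]
      field_simp
      ring
    rw [hq]
    set q := (Nat.centralBinom m : ℝ) / 4 ^ m with hqdef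
    push_cast
    have hr : (((2 * (m : ℝ) + 1) / (2 * (m : ℝ) + 2)) ^ 2 * (2 * ((m : ℝ) + 1) + 1))
        ≤ (2 * (m : ℝ) + 1) := by
      rw [div_pow, div_mul_eq_mul_div, div_le_iff₀ (by positivity)]
      nlinarith [sq_nonneg ((m : ℝ))]
    calc (q * ((2 * (m : ℝ) + 1) / (2 * (m : ℝ) + 2))) ^ 2 * (2 * ((m : ℝ) + 1) + 1)
        = q ^ 2 * (((2 * (m : ℝ) + 1) / (2 * (m : ℝ) + 2)) ^ 2 * (2 * ((m : ℝ) + 1) + 1)) := by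
          ring
      _ ≤ q ^ 2 * (2 * (m : ℝ) + 1) := mul_le_mul_of_nonneg_left hr (sq_nonneg q)
      _ ≤ 1 := ih

/-- Counting subsets of `range n` with more than half the elements. -/
lemma aux_count_half (n : ℕ) :
    2 * (((Finset.range n).powerset.filter (fun s => n < 2 * s.card)).card)
      + (if n % 2 = 0 then n.choose (n / 2) else 0) = 2 ^ n := by
  classical
  set Pn := (Finset.range n).powerset with hPn
  have hsplit :
      (Pn.filter (fun s => n < 2 * s.card)).card
        + (Pn.filter (fun s => ¬ n < 2 * s.card)).card = 2 ^ n := by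
    rw [Finset.card_filter_add_card_filter_not, hPn, Finset.card_powerset,
      Finset.card_range]
  have hunion : Pn.filter (fun s => ¬ n < 2 * s.card)
      = Pn.filter (fun s => 2 * s.card < n) ∪ Pn.filter (fun s => 2 * s.card = n) := by
    rw [← Finset.filter_or]
    exact Finset.filter_congr fun s _ => ⟨fun h => by omega, fun h => by omega⟩
  have hdisj : Disjoint (Pn.filter (fun s => 2 * s.card < n))
      (Pn.filter (fun s => 2 * s.card = n)) := by
    rw [Finset.disjoint_left]
    intro s hs1 hs2
    simp only [Finset.mem_filter] at hs1 hs2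
    omega
  have hcard_union : (Pn.filter (fun s => ¬ n < 2 * s.card)).card
      = (Pn.filter (fun s => 2 * s.card < n)).card
        + (Pn.filter (fun s => 2 * s.card = n)).card := by
    rw [hunion, Finset.card_union_of_disjoint hdisj]
  -- bijection between the two strict halves
  have hbij : (Pn.filter (fun s => 2 * s.card < n)).card
      = (Pn.filter (fun s => n < 2 * s.card)).card := by
    apply Finset.card_nbij' (fun s => Finset.range n \ s) (fun s => Finset.range n \ s)
    · intro s hs
      simp only [hPn, Finset.mem_coe, Finset.mem_filter, Finset.mem_powerset] at hs ⊢
      have hsub := hs.1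
      have hcard : (Finset.range n \ s).card = n - s.card := by
        rw [Finset.card_sdiff_of_subset hsub, Finset.card_range]
      have hle : s.card ≤ n := by
        simpa [Finset.card_range] using Finset.card_le_card hsub
      exact ⟨Finset.sdiff_subset, by omega⟩
    · intro s hs
      simp only [hPn, Finset.mem_coe, Finset.mem_filter, Finset.mem_powerset] at hs ⊢
      have hsub := hs.1
      have hcard : (Finset.range n \ s).card = n - s.card := by
        rw [Finset.card_sdiff_of_subset hsub, Finset.card_range]
      have hle : s.card ≤ n := by
        simpa [Finset.card_range] using Finset.card_le_card hsub
      exact ⟨Finset.sdiff_subset, by omega⟩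
    · intro s hs
      simp only [hPn, Finset.mem_coe, Finset.mem_filter, Finset.mem_powerset] at hs
      exact Finset.sdiff_sdiff_eq_self hs.1
    · intro s hs
      simp only [hPn, Finset.mem_coe, Finset.mem_filter, Finset.mem_powerset] at hs
      exact Finset.sdiff_sdiff_eq_self hs.1
  have hmid : (Pn.filter (fun s => 2 * s.card = n)).card
      = if n % 2 = 0 then n.choose (n / 2) else 0 := by
    by_cases hpar : n % 2 = 0
    · rw [if_pos hpar]
      have : Pn.filter (fun s => 2 * s.card = n)
          = Finset.powersetCard (n / 2) (Finset.range n) := by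
        rw [Finset.powersetCard_eq_filter, hPn]
        exact Finset.filter_congr fun s _ => ⟨fun h => by omega, fun h => by omega⟩
      rw [this, Finset.card_powersetCard, Finset.card_range]
    · rw [if_neg hpar]
      rw [Finset.card_eq_zero, Finset.filter_eq_empty_iff]
      intro s _
      omega
  rw [← hmid]
  omega

open scoped Classical in
/-- The event that the set of selected indices equals a given subset, as an intersection. -/
lemma aux_filter_eq_iInter {Ω : Type*} (p : ℕ → Ω → Prop) (n : ℕ) (s : Finset ℕ)
    (hs : s ⊆ Finset.range n) :
    {ω | (Finset.range n).filter (fun i => p i ω) = s}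
      = ⋂ i ∈ Finset.range n, (if i ∈ s then {ω | p i ω} else {ω | p i ω}ᶜ) := by
  classical
  ext ω
  simp only [Set.mem_setOf_eq, Set.mem_iInter, Finset.ext_iff, Finset.mem_filter]
  constructor
  · intro h i hi
    by_cases his : i ∈ s
    · have : p i ω := ((h i).2 his).2
      simp [his, this]
    · have : ¬ p i ω := fun hp => his ((h i).1 ⟨hi, hp⟩)
      simp [his, this]
  · intro h a
    constructor
    · rintro ⟨ha, hp⟩
      have := h a ha
      by_cases has : a ∈ s
      · exact has
      · simp only [if_neg has, Set.mem_compl_iff, Set.mem_setOf_eq] at this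
        exact absurd hp this
    · intro has
      have ha : a ∈ Finset.range n := hs has
      refine ⟨ha, ?_⟩
      have := h a ha
      simp only [if_pos has, Set.mem_setOf_eq] at this
      exact this

open scoped Classical in
/-- Measurability of the event that the selected index set equals `s`. -/
lemma aux_filter_eq_meas {Ω : Type*} [MeasurableSpace Ω] (p : ℕ → Ω → Prop)
    (hp : ∀ i, MeasurableSet {ω | p i ω}) (n : ℕ) (s : Finset ℕ) :
    MeasurableSet {ω | (Finset.range n).filter (fun i => p i ω) = s} := by
  classical
  by_cases hs : s ⊆ Finset.range n
  · rw [aux_filter_eq_iInter p n s hs]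
    apply MeasurableSet.biInter (Finset.range n).countable_toSet
    intro i _
    by_cases his : i ∈ s
    · simpa [his] using hp i
    · simpa [his] using (hp i).compl
  · have : {ω | (Finset.range n).filter (fun i => p i ω) = s} = ∅ := by
      ext ω
      simp only [Set.mem_setOf_eq, Set.mem_empty_iff_false, iff_false]
      intro h
      exact hs (h ▸ Finset.filter_subset _ _)
    rw [this]; exact MeasurableSet.empty

open scoped Classical in
/-- Decomposition of a card-condition event as a finite union. -/
lemma aux_event_card {Ω : Type*} (p : ℕ → Ω → Prop) (n : ℕ) (q : ℕ → Prop)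
    [DecidablePred q] :
    {ω | q ((Finset.range n).filter (fun i => p i ω)).card}
      = ⋃ s ∈ (Finset.range n).powerset.filter (fun s => q s.card),
          {ω | (Finset.range n).filter (fun i => p i ω) = s} := by
  classical
  ext ω
  simp only [Set.mem_setOf_eq, Set.mem_iUnion, Finset.mem_filter, Finset.mem_powerset]
  constructor
  · intro h
    exact ⟨(Finset.range n).filter (fun i => p i ω),
      ⟨Finset.filter_subset _ _, h⟩, rfl⟩
  · rintro ⟨s, ⟨-, hq⟩, rfl⟩
    exact hq

open scoped Classical in
/-- failure of exact empirical optimization under fixed censoring. For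
i.i.d. pairs with `P((Y^L,Y^U)=(0,1)) = P((Y^L,Y^U)=(0,2)) = 1/2`, the exact empirical
minimizer `Ccheck = [0, 1 + 1{P_n(0,1) < 1/2}]` satisfies
`P(Ccheck = [0,2]) = P(#{i : Yᵢ^U = 2} > n/2) → 1/2`; in particular `Ccheck` is not consistent for
the oracle interval `C* = [0,1]`. -/
theorem exact_empirical_optimization_inconsistent_fixed_censoring
    {Ω : Type*} [MeasureSpace Ω] (P : Measure Ω) [IsProbabilityMeasure P]
    (YL YU : ℕ → Ω → ℝ) (hYL : ∀ i, Measurable (YL i)) (hYU : ∀ i, Measurable (YU i))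
    (hindep : iIndepFun (fun i ω => (YL i ω, YU i ω)) P)
    (hlaw : ∀ i, P {ω | YL i ω = 0 ∧ YU i ω = 1} = 1 / 2 ∧
                 P {ω | YL i ω = 0 ∧ YU i ω = 2} = 1 / 2)
    (Ccheck : ℕ → Ω → Set ℝ)
    (hCcheck : ∀ n ω, Ccheck n ω = Set.Icc (0 : ℝ)
        (1 + if ((((Finset.range n).filter fun i =>
              (0 : ℝ) ≤ YL i ω ∧ YU i ω ≤ 1).card : ℝ) < (n : ℝ) / 2) then 1 else 0)) :
    (∀ n, P {ω | Ccheck n ω = Set.Icc (0 : ℝ) 2}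
        = P {ω | (n : ℝ) / 2 < (((Finset.range n).filter fun i => YU i ω = 2).card : ℝ)}) ∧
    Tendsto (fun n => (P {ω | Ccheck n ω = Set.Icc (0 : ℝ) 2}).toReal) atTop (nhds (1 / 2)) ∧
    ¬ Tendsto (fun n => (P {ω | Ccheck n ω = Set.Icc (0 : ℝ) 1}).toReal) atTop (nhds 1) := by
  classical
  -- measurable sets for the basic events
  have hm01 : ∀ i, MeasurableSet {ω | YL i ω = 0 ∧ YU i ω = 1} := fun i => by
    have : {ω | YL i ω = 0 ∧ YU i ω = 1} = YL i ⁻¹' {0} ∩ YU i ⁻¹' {1} := rfl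
    rw [this]
    exact ((hYL i) (measurableSet_singleton 0)).inter ((hYU i) (measurableSet_singleton 1))
  have hm02 : ∀ i, MeasurableSet {ω | YL i ω = 0 ∧ YU i ω = 2} := fun i => by
    have : {ω | YL i ω = 0 ∧ YU i ω = 2} = YL i ⁻¹' {0} ∩ YU i ⁻¹' {2} := rfl
    rw [this]
    exact ((hYL i) (measurableSet_singleton 0)).inter ((hYU i) (measurableSet_singleton 2))
  have hmB : ∀ i, MeasurableSet {ω | YU i ω = 2} := fun i =>
    (hYU i) (measurableSet_singleton 2)
  -- probability of YU i = 2 is 1/2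
  have hB : ∀ i, P {ω | YU i ω = 2} = 1 / 2 := by
    intro i
    refine le_antisymm ?_ ?_
    · have hdisj : Disjoint {ω | YU i ω = 2} {ω | YL i ω = 0 ∧ YU i ω = 1} := by
        rw [Set.disjoint_left]
        rintro ω h2 ⟨-, h1⟩
        rw [h2] at h1; norm_num at h1
      have h := measure_union (μ := P) hdisj (hm01 i)
      have hle : P ({ω | YU i ω = 2} ∪ {ω | YL i ω = 0 ∧ YU i ω = 1}) ≤ 1 :=
        prob_le_one
      rw [h, (hlaw i).1] at hle
      have hhalf : (1 / 2 : ℝ≥0∞) ≠ ⊤ := by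
        rw [one_div]; exact ENNReal.inv_ne_top.mpr (by norm_num)
      have hle2 : P {ω | YU i ω = 2} + 1 / 2 ≤ 1 / 2 + 1 / 2 := by
        rw [ENNReal.add_halves]; exact hle
      exact (ENNReal.add_le_add_iff_right hhalf).1 hle2
    · rw [← (hlaw i).2]
      exact measure_mono fun ω h => h.2
  have hBc : ∀ i, P {ω | ¬ YU i ω = 2} = 1 / 2 := by
    intro i
    have : {ω | ¬ YU i ω = 2} = {ω | YU i ω = 2}ᶜ := rfl
    rw [this, prob_compl_eq_one_sub (hmB i), hB i, one_div, ENNReal.one_sub_inv_two]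
  -- probability of {filter = s} for s ⊆ range n
  have hFprob : ∀ (n : ℕ) (s : Finset ℕ), s ⊆ Finset.range n →
      P {ω | (Finset.range n).filter (fun i => YU i ω = 2) = s} = (1 / 2 : ℝ≥0∞) ^ n := by
    intro n s hs
    rw [aux_filter_eq_iInter (fun i ω => YU i ω = 2) n s hs]
    set T2 : Set (ℝ × ℝ) := Prod.snd ⁻¹' {2} with hT2
    have hT2m : MeasurableSet T2 := measurable_snd (measurableSet_singleton 2)
    have hsets : ∀ i ∈ Finset.range n,
        (if i ∈ s then {ω | YU i ω = 2} else {ω | YU i ω = 2}ᶜ)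
          = (fun ω => (YL i ω, YU i ω)) ⁻¹' (if i ∈ s then T2 else T2ᶜ) := by
      intro i _
      by_cases his : i ∈ s <;> simp [his, hT2, Set.preimage_compl]
      · rfl
      · rfl
    rw [Set.iInter₂_congr hsets]
    rw [hindep.measure_inter_preimage_eq_mul (Finset.range n)
      (sets := fun i => if i ∈ s then T2 else T2ᶜ)
      (fun i _ => by by_cases his : i ∈ s <;> simp [his, hT2m, hT2m.compl])]
    rw [Finset.prod_congr rfl (fun i _ => ?_), Finset.prod_const, Finset.card_range]
    by_cases his : i ∈ s
    · simp only [if_pos his]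
      have : (fun ω => (YL i ω, YU i ω)) ⁻¹' T2 = {ω | YU i ω = 2} := rfl
      rw [this, hB i]
    · simp only [if_neg his]
      have : (fun ω => (YL i ω, YU i ω)) ⁻¹' T2ᶜ = {ω | ¬ YU i ω = 2} := rfl
      rw [this, hBc i]
  -- probability of the "more than half" event
  have hEn : ∀ n : ℕ,
      P {ω | (n : ℝ) / 2 < (((Finset.range n).filter fun i => YU i ω = 2).card : ℝ)}
        = (((Finset.range n).powerset.filter (fun s => n < 2 * s.card)).card : ℝ≥0∞)
            * (1 / 2 : ℝ≥0∞) ^ n := by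
    intro n
    have hcond : ∀ (c : ℕ), ((n : ℝ) / 2 < (c : ℝ)) ↔ n < 2 * c := by
      intro c
      rw [div_lt_iff₀ (by norm_num : (0 : ℝ) < 2)]
      constructor
      · intro h
        have h' : (n : ℝ) < ((2 * c : ℕ) : ℝ) := by push_cast; linarith
        exact_mod_cast h'
      · intro h
        have h' : (n : ℝ) < ((2 * c : ℕ) : ℝ) := by exact_mod_cast h
        push_cast at h'; linarith
    have hset : {ω | (n : ℝ) / 2 < (((Finset.range n).filter fun i => YU i ω = 2).card : ℝ)}
        = {ω | n < 2 * ((Finset.range n).filter fun i => YU i ω = 2).card} := by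
      ext ω; exact hcond _
    have hdpw : (((Finset.range n).powerset.filter (fun s => n < 2 * s.card)) : Set (Finset ℕ)).PairwiseDisjoint
        (fun s => {ω | (Finset.range n).filter (fun i => YU i ω = 2) = s}) := by
      intro s hs t ht hst
      simp only [Function.onFun]
      rw [Set.disjoint_left]
      rintro ω h1 h2
      exact hst (h1.symm.trans h2)
    rw [hset, aux_event_card (fun i ω => YU i ω = 2) n (fun c => n < 2 * c),
      measure_biUnion_finset hdpw (fun s hs => aux_filter_eq_meas _ hmB n s),
      Finset.sum_congr rfl (fun s hs => hFprob n s
        (Finset.mem_powerset.1 (Finset.mem_filter.1 hs).1)),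
      Finset.sum_const, nsmul_eq_mul]
  -- Part 1: the set equality up to null sets
  have hG : ∀ᵐ ω ∂P, ∀ i, (YL i ω = 0 ∧ YU i ω = 1) ∨ (YL i ω = 0 ∧ YU i ω = 2) := by
    rw [ae_all_iff]
    intro i
    have hdisj : Disjoint {ω | YL i ω = 0 ∧ YU i ω = 1} {ω | YL i ω = 0 ∧ YU i ω = 2} := by
      rw [Set.disjoint_left]
      rintro ω ⟨-, h1⟩ ⟨-, h2⟩
      rw [h1] at h2; norm_num at h2
    have hGi : P ({ω | YL i ω = 0 ∧ YU i ω = 1} ∪ {ω | YL i ω = 0 ∧ YU i ω = 2}) = 1 := by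
      rw [measure_union (μ := P) hdisj (hm02 i), (hlaw i).1, (hlaw i).2, ENNReal.add_halves]
    have := (prob_compl_eq_zero_iff ((hm01 i).union (hm02 i))).2 hGi
    rw [ae_iff]
    exact this
  have hsetA : ∀ n, {ω | Ccheck n ω = Set.Icc (0 : ℝ) 2}
      = {ω | ((((Finset.range n).filter fun i =>
          (0 : ℝ) ≤ YL i ω ∧ YU i ω ≤ 1).card : ℝ) < (n : ℝ) / 2)} := by
    intro n
    ext ω
    simp only [Set.mem_setOf_eq, hCcheck n ω]
    split_ifs with h
    · simp only [h, iff_true]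
      norm_num
    · simp only [h, iff_false]
      intro heq
      have h2 : (2 : ℝ) ∈ Set.Icc (0 : ℝ) 2 := by norm_num
      rw [← heq] at h2
      simp only [Set.mem_Icc] at h2
      linarith [h2.2]
  have haeq : ∀ n, {ω | Ccheck n ω = Set.Icc (0 : ℝ) 2}
      =ᵐ[P] {ω | (n : ℝ) / 2 < (((Finset.range n).filter fun i => YU i ω = 2).card : ℝ)} := by
    intro n
    rw [hsetA n]
    rw [Filter.eventuallyEq_set]
    filter_upwards [hG] with ω hω
    have hcong : (Finset.range n).filter (fun i => (0 : ℝ) ≤ YL i ω ∧ YU i ω ≤ 1)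
        = (Finset.range n).filter (fun i => ¬ YU i ω = 2) := by
      apply Finset.filter_congr
      intro i _
      rcases hω i with ⟨h0, h1⟩ | ⟨h0, h2⟩
      · constructor
        · intro _; rw [h1]; norm_num
        · intro _; exact ⟨by rw [h0], by rw [h1]⟩
      · constructor
        · rintro ⟨-, hle⟩; rw [h2] at hle; norm_num at hle
        · intro h; exact absurd h2 h
    rw [hcong]
    have hsum := Finset.card_filter_add_card_filter_not
      (s := Finset.range n) (p := fun i => YU i ω = 2)
    rw [Finset.card_range] at hsum
    set k := ((Finset.range n).filter (fun i => YU i ω = 2)).card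
    set c := ((Finset.range n).filter (fun i => ¬ YU i ω = 2)).card
    have hkc : (k : ℝ) + (c : ℝ) = n := by exact_mod_cast hsum
    constructor
    · intro h; linarith
    · intro h; linarith
  have hpart1 : ∀ n, P {ω | Ccheck n ω = Set.Icc (0 : ℝ) 2}
      = P {ω | (n : ℝ) / 2 < (((Finset.range n).filter fun i => YU i ω = 2).card : ℝ)} :=
    fun n => measure_congr (haeq n)
  have hmeasE : ∀ n : ℕ, MeasurableSet
      {ω | (n : ℝ) / 2 < (((Finset.range n).filter fun i => YU i ω = 2).card : ℝ)} := by
    intro n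
    have hcond : ∀ (c : ℕ), ((n : ℝ) / 2 < (c : ℝ)) ↔ n < 2 * c := by
      intro c
      rw [div_lt_iff₀ (by norm_num : (0 : ℝ) < 2)]
      constructor
      · intro h
        have h' : (n : ℝ) < ((2 * c : ℕ) : ℝ) := by push_cast; linarith
        exact_mod_cast h'
      · intro h
        have h' : (n : ℝ) < ((2 * c : ℕ) : ℝ) := by exact_mod_cast h
        push_cast at h'; linarith
    have hset : {ω | (n : ℝ) / 2 < (((Finset.range n).filter fun i => YU i ω = 2).card : ℝ)}
        = {ω | n < 2 * ((Finset.range n).filter fun i => YU i ω = 2).card} := by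
      ext ω; exact hcond _
    rw [hset, aux_event_card (fun i ω => YU i ω = 2) n (fun c => n < 2 * c)]
    exact Finset.measurableSet_biUnion _ (fun s hs => aux_filter_eq_meas _ hmB n s)
  -- Part 2: convergence to 1/2
  have hAval : ∀ n : ℕ,
      (P {ω | Ccheck n ω = Set.Icc (0 : ℝ) 2}).toReal
        = 1 / 2 - (if n % 2 = 0 then (n.choose (n / 2) : ℝ) else 0) / 2 ^ (n + 1) := by
    intro n
    rw [hpart1 n, hEn n]
    rw [ENNReal.toReal_mul, ENNReal.toReal_pow, ENNReal.toReal_div,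
      ENNReal.toReal_one, ENNReal.toReal_ofNat, ENNReal.toReal_natCast]
    have hnat := aux_count_half n
    have hcast : 2 * ((((Finset.range n).powerset.filter (fun s => n < 2 * s.card)).card : ℝ))
        + (if n % 2 = 0 then (n.choose (n / 2) : ℝ) else 0) = 2 ^ n := by
      have := congrArg (Nat.cast : ℕ → ℝ) hnat
      push_cast at this
      split_ifs at this ⊢ with h
      · push_cast at this ⊢; linarith
      · push_cast at this ⊢; linarith
    have h2n : (0 : ℝ) < 2 ^ n := by positivity
    have h2n1 : (0 : ℝ) < 2 ^ (n + 1) := by positivity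
    rw [pow_succ] at h2n1 ⊢
    rw [one_div_pow]
    set K := ((((Finset.range n).powerset.filter (fun s => n < 2 * s.card)).card : ℝ)) with hKdef
    set c := (if n % 2 = 0 then (n.choose (n / 2) : ℝ) else 0) with hcdef
    have hK : K = (2 ^ n - c) / 2 := by linarith
    rw [hK]
    field_simp
  have htend2 : Tendsto (fun n : ℕ =>
      (if n % 2 = 0 then (n.choose (n / 2) : ℝ) else 0) / 2 ^ (n + 1)) atTop (nhds 0) := by
    set q : ℕ → ℝ := fun m => (Nat.centralBinom m : ℝ) / 4 ^ m with hqdef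
    have hq0 : ∀ m, 0 ≤ q m := fun m => by positivity
    have hqsq : Tendsto (fun m => q m ^ 2) atTop (nhds 0) := by
      apply squeeze_zero (fun m => sq_nonneg _) (g := fun m : ℕ => 1 / ((m : ℝ) + 1))
      · intro m
        have h := aux_centralBinom_sq_bound m
        have hpos : (0 : ℝ) < (m : ℝ) + 1 := by positivity
        have hm0 : (0 : ℝ) ≤ (m : ℝ) := Nat.cast_nonneg m
        rw [le_div_iff₀ hpos]
        nlinarith [sq_nonneg (q m)]
      · exact tendsto_one_div_add_atTop_nhds_zero_nat
    have hqt : Tendsto q atTop (nhds 0) := by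
      have := (Real.continuous_sqrt.tendsto 0).comp hqsq
      rw [Real.sqrt_zero] at this
      convert this using 1
      ext m
      simp only [Function.comp_apply]
      rw [Real.sqrt_sq (hq0 m)]
    have hdiv : Tendsto (fun n : ℕ => n / 2) atTop atTop := by
      apply tendsto_atTop_atTop.2
      intro b
      exact ⟨2 * b, fun a ha => by omega⟩
    have hcomp : Tendsto (fun n : ℕ => q (n / 2)) atTop (nhds 0) := hqt.comp hdiv
    apply squeeze_zero (g := fun n : ℕ => q (n / 2))
    · intro n
      split_ifs with h
      · positivity
      · simp
    · intro n
      by_cases h : n % 2 = 0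
      · rw [if_pos h]
        have hn : n = 2 * (n / 2) := by omega
        set m := n / 2
        have hch : n.choose (n / 2) = Nat.centralBinom m := by
          rw [Nat.centralBinom]; congr 1 <;> omega
        rw [hch]
        have hpow : (2 : ℝ) ^ (n + 1) = 2 * 4 ^ m := by
          rw [hn]
          rw [pow_succ']
          congr 1
          rw [show (4 : ℝ) = 2 ^ 2 by norm_num, ← pow_mul]
        rw [hpow]
        have h4 : (0 : ℝ) < 4 ^ m := by positivity
        have hcb : (0 : ℝ) ≤ (Nat.centralBinom m : ℝ) := by positivity
        rw [hqdef]
        rw [div_le_div_iff₀ (by positivity) h4]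
        nlinarith
      · rw [if_neg h]
        simp only [zero_div]
        exact hq0 _
    · exact hcomp
  have hpart2 : Tendsto (fun n => (P {ω | Ccheck n ω = Set.Icc (0 : ℝ) 2}).toReal)
      atTop (nhds (1 / 2)) := by
    simp only [hAval]
    have h := (tendsto_const_nhds (x := (1 / 2 : ℝ)) (f := atTop (α := ℕ))).sub htend2
    simpa using h
  refine ⟨hpart1, hpart2, ?_⟩
  -- Part 3: inconsistency
  intro hcontra
  have hsetc : ∀ n, {ω | Ccheck n ω = Set.Icc (0 : ℝ) 1}
      = {ω | Ccheck n ω = Set.Icc (0 : ℝ) 2}ᶜ := by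
    intro n
    ext ω
    simp only [Set.mem_setOf_eq, Set.mem_compl_iff, hCcheck n ω]
    have hne : Set.Icc (0 : ℝ) 1 ≠ Set.Icc (0 : ℝ) 2 := by
      intro heq
      have h2 : (2 : ℝ) ∈ Set.Icc (0 : ℝ) 2 := by norm_num
      rw [← heq] at h2
      simp only [Set.mem_Icc] at h2
      linarith [h2.2]
    split_ifs with h
    · have h11 : (1 + 1 : ℝ) = 2 := by norm_num
      rw [h11]
      exact ⟨fun heq => (hne heq.symm).elim, fun hc => (hc rfl).elim⟩
    · rw [add_zero]
      exact ⟨fun _ heq => hne heq, fun _ => rfl⟩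
  have hnull : ∀ n, NullMeasurableSet {ω | Ccheck n ω = Set.Icc (0 : ℝ) 2} P := fun n =>
    ((hmeasE n).nullMeasurableSet).congr (haeq n).symm
  have hP1 : ∀ n, (P {ω | Ccheck n ω = Set.Icc (0 : ℝ) 1}).toReal
      = 1 - (P {ω | Ccheck n ω = Set.Icc (0 : ℝ) 2}).toReal := by
    intro n
    rw [hsetc n, prob_compl_eq_one_sub₀ (hnull n),
      ENNReal.toReal_sub_of_le prob_le_one ENNReal.one_ne_top, ENNReal.toReal_one]
  simp only [hP1] at hcontra
  have : Tendsto (fun n => 1 - (1 - (P {ω | Ccheck n ω = Set.Icc (0 : ℝ) 2}).toReal))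
      atTop (nhds (1 - 1)) := tendsto_const_nhds.sub hcontra
  simp only [sub_sub_cancel, sub_self] at this
  have := tendsto_nhds_unique hpart2 this
  norm_num at this
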